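/- With the notation of the context, for every 0 ≤ i ≤ ⌊d/2⌋, the coefficient a'_i of t^i in a'(t) satisfies a'_i = (p_0 + p_n + p_{2n} + ⋯ + p_{in}) − (p_{n−1} + p_{2n−1} + ⋯ + p_{in−1}). -/

import Mathlib

open Polynomial

/-- `ehrG d p m = ∑_{i=0}^{d} p_i * C(m+d-i, d)`, the value at `m` of the polynomial `g`
associated to `p` by `p(t)/(1-t)^(d+1) = ∑_{m ≥ 0} g(m) tᵐ`. -/
def ehrG (d : ℕ) (p : Polynomial ℤ) (m : ℕ) : ℤ :=
  ∑ i ∈ Finset.range (d + 1), p.coeff i * ((m + d - i).choose d : ℤ)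

/-- The polynomial `1 + t + ⋯ + t^{n-1}`. -/
noncomputable def geomPoly (n : ℕ) : Polynomial ℤ :=
  ∑ j ∈ Finset.range n, X ^ j

/-- The power series `1/(1-tⁿ)^{d+1}`. -/
noncomputable def chooseSeries (n d : ℕ) : PowerSeries ℤ :=
  PowerSeries.mk fun k => if n ∣ k then ((k / n + d).choose d : ℤ) else 0

lemma chooseSeries_step (n d : ℕ) (hn : 0 < n) :
    chooseSeries n (d + 1) * (1 - PowerSeries.X ^ n) = chooseSeries n d := by
  ext k
  rw [mul_sub, mul_one, map_sub, PowerSeries.coeff_mul_X_pow']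
  simp only [chooseSeries, PowerSeries.coeff_mk]
  by_cases hdvd : n ∣ k
  · obtain ⟨j, rfl⟩ := hdvd
    rcases Nat.eq_zero_or_pos j with rfl | hj
    · have hle : ¬ n ≤ n * 0 := by omega
      rw [if_neg hle, if_pos ⟨0, rfl⟩, if_pos ⟨0, rfl⟩]
      norm_num
    · obtain ⟨j', rfl⟩ : ∃ j', j = j' + 1 := ⟨j - 1, by omega⟩
      have h1 : n ≤ n * (j' + 1) := Nat.le_mul_of_pos_right n (by omega)
      have h2 : n * (j' + 1) - n = n * j' := by rw [Nat.mul_add, mul_one, Nat.add_sub_cancel]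
      rw [if_pos h1, h2, if_pos ⟨j' + 1, rfl⟩, if_pos ⟨j', rfl⟩, if_pos ⟨j' + 1, rfl⟩,
        Nat.mul_div_cancel_left _ hn, Nat.mul_div_cancel_left _ hn]
      have hp : (j' + 1 + (d + 1)).choose (d + 1)
          = (j' + d + 1).choose d + (j' + d + 1).choose (d + 1) := by
        rw [show j' + 1 + (d + 1) = (j' + d + 1) + 1 by omega]
        exact Nat.choose_succ_succ _ d
      rw [hp, show j' + (d + 1) = j' + d + 1 by omega, show j' + 1 + d = j' + d + 1 by omega]
      push_cast
      ring
  · rw [if_neg hdvd, if_neg hdvd]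
    split_ifs with h1 h2
    · exfalso
      obtain ⟨c, hc⟩ := h2
      exact hdvd ⟨c + 1, by rw [Nat.mul_add, mul_one]; omega⟩
    · simp
    · simp

lemma chooseSeries_mul (n d : ℕ) (hn : 0 < n) :
    chooseSeries n d * (1 - PowerSeries.X ^ n) ^ (d + 1) = 1 := by
  induction d with
  | zero =>
    rw [pow_one]
    ext k
    rw [mul_sub, mul_one, map_sub, PowerSeries.coeff_mul_X_pow']
    simp only [chooseSeries, PowerSeries.coeff_mk, Nat.choose_zero_right, Nat.cast_one,
      PowerSeries.coeff_one]
    by_cases hdvd : n ∣ k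
    · obtain ⟨j, rfl⟩ := hdvd
      rcases Nat.eq_zero_or_pos j with rfl | hj
      · have hle : ¬ n ≤ n * 0 := by omega
        rw [if_neg hle, if_pos ⟨0, rfl⟩, if_pos (by omega : n * 0 = 0)]
        norm_num
      · have h1 : n ≤ n * j := Nat.le_mul_of_pos_right n hj
        have h2 : n ∣ n * j - n := ⟨j - 1, by rw [Nat.mul_sub, mul_one]⟩
        rw [if_pos ⟨j, rfl⟩, if_pos h1, if_pos h2,
          if_neg (Nat.mul_ne_zero hn.ne' hj.ne')]
        ring
    · have hk : k ≠ 0 := by rintro rfl; exact hdvd ⟨0, by omega⟩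
      rw [if_neg hdvd, if_neg hk]
      split_ifs with h1 h3
      · exfalso
        obtain ⟨c, hc⟩ := h3
        exact hdvd ⟨c + 1, by rw [Nat.mul_add, mul_one]; omega⟩
      · simp
      · simp
  | succ d ih =>
    rw [pow_succ', ← mul_assoc, chooseSeries_step n d hn, ih]

lemma ehrG_eq_coeff (d : ℕ) (hd : 0 < d) (f : Polynomial ℤ) (hf : f.natDegree ≤ d) (K : ℕ) :
    ehrG d f K = PowerSeries.coeff K ((f : PowerSeries ℤ) * chooseSeries 1 d) := by
  rw [PowerSeries.coeff_mul, Finset.Nat.sum_antidiagonal_eq_sum_range_succ_mk]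
  simp only [chooseSeries, PowerSeries.coeff_mk, Polynomial.coeff_coe, Nat.one_dvd, if_true,
    Nat.div_one]
  have e1 : ∀ i ∈ Finset.range (K + 1),
      f.coeff i * ((K - i + d).choose d : ℤ) = f.coeff i * ((K + d - i).choose d : ℤ) := by
    intro i hi
    rw [Finset.mem_range] at hi
    rw [show K - i + d = K + d - i by omega]
  rw [Finset.sum_congr rfl e1]
  have hsub1 : Finset.range (d + 1) ⊆ Finset.range (K + d + 2) := by
    apply Finset.range_subset_range.mpr; omega
  have hsub2 : Finset.range (K + 1) ⊆ Finset.range (K + d + 2) := by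
    apply Finset.range_subset_range.mpr; omega
  rw [ehrG, Finset.sum_subset hsub1 (fun i _ hi => by
    rw [Finset.mem_range, not_lt] at hi
    rw [Polynomial.coeff_eq_zero_of_natDegree_lt (by omega), zero_mul]),
    Finset.sum_subset hsub2 (fun i hi' hi => by
    rw [Finset.mem_range, not_lt] at hi
    rw [Finset.mem_range] at hi'
    rw [Nat.choose_eq_zero_of_lt (by omega), Nat.cast_zero, mul_zero])]

lemma coeff_mul_chooseSeries (d n : ℕ) (hd : 0 < d) (hn : 0 < n) (P : Polynomial ℤ)
    (hP : P.natDegree ≤ n * (d + 1) - 1) (m : ℕ) :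
    PowerSeries.coeff (n * m) ((P : PowerSeries ℤ) * chooseSeries n d)
      = ∑ j ∈ Finset.range (d + 1), P.coeff (n * j) * ((m + d - j).choose d : ℤ) := by
  rw [PowerSeries.coeff_mul, Finset.Nat.sum_antidiagonal_eq_sum_range_succ_mk]
  simp only [chooseSeries, PowerSeries.coeff_mk, Polynomial.coeff_coe]
  have step1 : ∑ i ∈ Finset.range (n * m + 1),
      P.coeff i * (if n ∣ n * m - i then (((n * m - i) / n + d).choose d : ℤ) else 0)
      = ∑ j ∈ Finset.range (m + 1), P.coeff (n * j) * ((m + d - j).choose d : ℤ) := by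
    rw [← Finset.sum_filter_of_ne (p := fun i => n ∣ i)
      (f := fun i => P.coeff i * (if n ∣ n * m - i then (((n * m - i) / n + d).choose d : ℤ) else 0))
      (by
        intro i hi hne
        rw [Finset.mem_range] at hi
        by_contra hndvd
        apply hne
        have : ¬ n ∣ n * m - i := by
          rintro ⟨c, hc⟩
          exact hndvd ⟨m - c, by
            have h1 : i ≤ n * m := by omega
            rw [Nat.mul_sub]
            omega⟩
        simp [this])]
    apply Finset.sum_nbij' (i := fun i => i / n) (j := fun j => n * j)
    · intro i hi
      rw [Finset.mem_filter, Finset.mem_range] at hi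
      rw [Finset.mem_range]
      obtain ⟨hi1, c, rfl⟩ := hi
      rw [Nat.mul_div_cancel_left _ hn]
      by_contra hcm
      push_neg at hcm
      have h3 : n * (m + 1) ≤ n * c := Nat.mul_le_mul_left n (by omega)
      have h4 : n * (m + 1) = n * m + n := by ring
      omega
    · intro j hj
      rw [Finset.mem_range] at hj
      rw [Finset.mem_filter, Finset.mem_range]
      constructor
      · have : n * j ≤ n * m := Nat.mul_le_mul_left n (by omega)
        omega
      · exact ⟨j, rfl⟩
    · intro i hi
      rw [Finset.mem_filter] at hi
      obtain ⟨_, c, rfl⟩ := hi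
      rw [Nat.mul_div_cancel_left _ hn]
    · intro j hj
      rw [Nat.mul_div_cancel_left _ hn]
    · intro i hi
      rw [Finset.mem_filter, Finset.mem_range] at hi
      obtain ⟨hi1, c, rfl⟩ := hi
      rw [Nat.mul_div_cancel_left _ hn]
      have hcm : c ≤ m := by
        by_contra hcm
        push_neg at hcm
        have h3 : n * (m + 1) ≤ n * c := Nat.mul_le_mul_left n (by omega)
        have h4 : n * (m + 1) = n * m + n := by ring
        omega
      have hdvd : n ∣ n * m - n * c := ⟨m - c, by rw [Nat.mul_sub]⟩
      rw [if_pos hdvd, ← Nat.mul_sub, Nat.mul_div_cancel_left _ hn]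
      congr 3
      omega
  rw [step1]
  have hsub1 : Finset.range (m + 1) ⊆ Finset.range (m + d + 2) := by
    apply Finset.range_subset_range.mpr; omega
  have hsub2 : Finset.range (d + 1) ⊆ Finset.range (m + d + 2) := by
    apply Finset.range_subset_range.mpr; omega
  rw [Finset.sum_subset hsub1 (fun i hi' hi => by
    rw [Finset.mem_range, not_lt] at hi
    rw [Finset.mem_range] at hi'
    rw [Nat.choose_eq_zero_of_lt (by omega), Nat.cast_zero, mul_zero]),
    Finset.sum_subset hsub2 (fun i _ hi => by
    rw [Finset.mem_range, not_lt] at hi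
    have hle : n * (d + 1) ≤ n * i := Nat.mul_le_mul_left n (by omega)
    have hpos : 0 < n * (d + 1) := by positivity
    rw [Polynomial.coeff_eq_zero_of_natDegree_lt (by omega), zero_mul])]

lemma geomPoly_natDegree_le (n : ℕ) : (geomPoly n).natDegree ≤ n - 1 := by
  apply Polynomial.natDegree_sum_le_of_forall_le
  intro i hi
  rw [Finset.mem_range] at hi
  exact (Polynomial.natDegree_X_pow _).le.trans (by omega)

lemma geomPoly_coeff (n i : ℕ) : (geomPoly n).coeff i = if i < n then 1 else 0 := by
  rw [geomPoly, Polynomial.finset_sum_coeff]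
  simp only [Polynomial.coeff_X_pow]
  rw [Finset.sum_ite_eq (Finset.range n) i (fun _ => (1 : ℤ))]
  simp [Finset.mem_range]

lemma geom_mul_one_sub (n : ℕ) :
    (geomPoly n) * (1 - Polynomial.X) = 1 - Polynomial.X ^ n := by
  have := geom_sum_mul (Polynomial.X : Polynomial ℤ) n
  rw [geomPoly]
  linear_combination -this

lemma series_eq (d n : ℕ) (hn : 0 < n) (h : Polynomial ℤ) :
    ((h : PowerSeries ℤ) * chooseSeries 1 d)
      = ((h * geomPoly n ^ (d + 1) : Polynomial ℤ) : PowerSeries ℤ) * chooseSeries n d := by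
  have hg : ((geomPoly n : Polynomial ℤ) : PowerSeries ℤ) * (1 - PowerSeries.X)
      = 1 - PowerSeries.X ^ n := by
    rw [show (1 - PowerSeries.X : PowerSeries ℤ)
        = ((1 - Polynomial.X : Polynomial ℤ) : PowerSeries ℤ) by
      rw [Polynomial.coe_sub, Polynomial.coe_one, Polynomial.coe_X],
      ← Polynomial.coe_mul, geom_mul_one_sub, Polynomial.coe_sub, Polynomial.coe_one,
      Polynomial.coe_pow, Polynomial.coe_X]
  have hQ : ((geomPoly n ^ (d + 1) : Polynomial ℤ) : PowerSeries ℤ)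
      * (1 - PowerSeries.X) ^ (d + 1) = (1 - PowerSeries.X ^ n) ^ (d + 1) := by
    rw [Polynomial.coe_pow, ← mul_pow, hg]
  have h1 := chooseSeries_mul 1 d one_pos
  rw [pow_one] at h1
  have h2 := chooseSeries_mul n d hn
  rw [Polynomial.coe_mul]
  linear_combination (-(↑h * chooseSeries 1 d)) * h2
    + (↑h * ((geomPoly n ^ (d+1) : Polynomial ℤ) : PowerSeries ℤ) * chooseSeries n d) * h1
    + (-(↑h * chooseSeries 1 d * chooseSeries n d)) * hQ

lemma ehrG_zero_of (d : ℕ) (f : Polynomial ℤ) (hf : f.natDegree ≤ d)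
    (h0 : ∀ m, ehrG d f m = 0) : f = 0 := by
  have key : ∀ m, f.coeff m = 0 := by
    intro m
    induction m using Nat.strong_induction_on with
    | _ m ih =>
      by_cases hm : d < m
      · exact Polynomial.coeff_eq_zero_of_natDegree_lt (lt_of_le_of_lt hf hm)
      push_neg at hm
      have h1 := h0 m
      rw [ehrG, Finset.sum_eq_single m (fun b hb hbm => by
        rw [Finset.mem_range] at hb
        rcases lt_or_gt_of_ne hbm with hlt | hgt
        · rw [ih b hlt, zero_mul]
        · rw [Nat.choose_eq_zero_of_lt (by omega), Nat.cast_zero, mul_zero])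
        (fun hmem => absurd (Finset.mem_range.mpr (by omega)) hmem)] at h1
      rw [show m + d - m = d by omega, Nat.choose_self] at h1
      simpa using h1
  exact Polynomial.ext fun k => (key k).trans (Polynomial.coeff_zero k).symm

lemma reflect_of_sym (f : Polynomial ℤ) (D : ℕ)
    (hsym : ∀ i ≤ D, f.coeff i = f.coeff (D - i)) : f.reflect D = f := by
  ext i
  rw [Polynomial.coeff_reflect]
  rcases le_or_gt i D with hi | hi
  · rw [Polynomial.revAt_le hi]
    exact (hsym i hi).symm
  · rw [Polynomial.revAt_eq_self_of_lt hi]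

lemma reflect_geomPoly (n : ℕ) (hn : 0 < n) : (geomPoly n).reflect (n - 1) = geomPoly n := by
  apply reflect_of_sym
  intro i hi
  rw [geomPoly_coeff, geomPoly_coeff, if_pos (by omega), if_pos (by omega)]

lemma reflect_geomPow (n : ℕ) (hn : 0 < n) (e : ℕ) :
    (geomPoly n ^ e).reflect (e * (n - 1)) = geomPoly n ^ e := by
  induction e with
  | zero =>
    simp only [pow_zero, Nat.zero_mul]
    ext i
    rw [Polynomial.coeff_reflect]
    rcases Nat.eq_zero_or_pos i with rfl | hi
    · rw [Polynomial.revAt_le (le_refl 0)]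
    · rw [Polynomial.revAt_eq_self_of_lt hi]
  | succ e ih =>
    rw [pow_succ, show (e + 1) * (n - 1) = e * (n - 1) + (n - 1) by ring,
      Polynomial.reflect_mul _ _ ((Polynomial.natDegree_pow_le).trans
        (Nat.mul_le_mul_left e (geomPoly_natDegree_le n))) (geomPoly_natDegree_le n),
      ih, reflect_geomPoly n hn]

theorem stmt16 (d n : ℕ) (hd : 0 < d) (hn : 0 < n)
    (h Uh a b a' b' : Polynomial ℤ)
    (hdeg : h.natDegree ≤ d)
    (hUdeg : Uh.natDegree ≤ d)
    (hU : ∀ m : ℕ, ehrG d Uh m = ehrG d h (n * m))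
    -- h = a + b, the symmetric decomposition of h
    (hab : h = a + b)
    (hadeg : a.natDegree ≤ d) (hbdeg : b.natDegree ≤ d + 1)
    (hasym : ∀ i ≤ d, a.coeff i = a.coeff (d - i))
    (hbsym : ∀ i ≤ d + 1, b.coeff i = b.coeff (d + 1 - i))
    -- U_n h = a' + b', the symmetric decomposition of U_n h
    (hab' : Uh = a' + b')
    (ha'deg : a'.natDegree ≤ d) (hb'deg : b'.natDegree ≤ d + 1)
    (ha'sym : ∀ i ≤ d, a'.coeff i = a'.coeff (d - i))
    (hb'sym : ∀ i ≤ d + 1, b'.coeff i = b'.coeff (d + 1 - i)) :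
    -- a'_i = (p_0 + p_n + ⋯ + p_{in}) − (p_{n-1} + p_{2n-1} + ⋯ + p_{in-1}),
    -- where p = a(t)(1 + t + ⋯ + t^{n-1})^{d+1}
    ∀ i ≤ d / 2,
      a'.coeff i =
        (∑ j ∈ Finset.range (i + 1), (a * geomPoly n ^ (d + 1)).coeff (j * n)) -
          ∑ j ∈ Finset.range i, (a * geomPoly n ^ (d + 1)).coeff ((j + 1) * n - 1) := by
  obtain ⟨n', rfl⟩ : ∃ n', n = n' + 1 := ⟨n - 1, by omega⟩
  set n := n' + 1 with hndef
  have hband : d + (d + 1) * (n - 1) + 1 = n * (d + 1) := by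
    show d + (d + 1) * (n' + 1 - 1) + 1 = (n' + 1) * (d + 1)
    rw [Nat.add_sub_cancel]
    ring
  have hQdeg : (geomPoly n ^ (d + 1)).natDegree ≤ (d + 1) * (n - 1) :=
    (Polynomial.natDegree_pow_le).trans (Nat.mul_le_mul_left (d + 1) (geomPoly_natDegree_le n))
  set Q := geomPoly n ^ (d + 1) with hQdef
  set P := h * Q with hPdef
  set p := a * Q with hpdef
  set pb := b * Q with hpbdef
  have hPdeg : P.natDegree ≤ n * (d + 1) - 1 :=
    (Polynomial.natDegree_mul_le).trans (by omega)
  have hpdeg : p.natDegree ≤ n * (d + 1) - 1 :=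
    (Polynomial.natDegree_mul_le).trans (by omega)
  have hpbdeg : pb.natDegree ≤ n * (d + 1) :=
    (Polynomial.natDegree_mul_le).trans (by omega)
  have hNpos : 0 < n * (d + 1) := by positivity
  -- the coefficients of Uh are the coefficients of P at multiples of n
  set V : Polynomial ℤ :=
    ∑ j ∈ Finset.range (d + 1), Polynomial.C (P.coeff (n * j)) * Polynomial.X ^ j with hVdef
  have hVdeg : V.natDegree ≤ d := by
    apply Polynomial.natDegree_sum_le_of_forall_le
    intro j hj
    rw [Finset.mem_range] at hj
    exact (Polynomial.natDegree_C_mul_X_pow_le _ _).trans (by omega)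
  have hVcoeff : ∀ j ≤ d, V.coeff j = P.coeff (n * j) := by
    intro j hj
    rw [hVdef, Polynomial.finset_sum_coeff]
    simp only [Polynomial.coeff_C_mul, Polynomial.coeff_X_pow]
    rw [Finset.sum_congr rfl (fun i _ => by
      rw [show (P.coeff (n * i) * if j = i then (1:ℤ) else 0)
        = if i = j then P.coeff (n * i) else 0 by
        by_cases hij : i = j
        · subst hij; simp
        · rw [if_neg (fun e => hij e.symm), if_neg hij, mul_zero]]),
      Finset.sum_ite_eq' (Finset.range (d + 1)) j fun i => P.coeff (n * i),
      if_pos (Finset.mem_range.mpr (by omega))]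
  have hVehr : ∀ m, ehrG d V m = ehrG d h (n * m) := by
    intro m
    rw [ehrG_eq_coeff d hd h hdeg (n * m), series_eq d n hn h,
      coeff_mul_chooseSeries d n hd hn P hPdeg m, ehrG]
    apply Finset.sum_congr rfl
    intro j hj
    rw [Finset.mem_range] at hj
    rw [hVcoeff j (by omega)]
  have hUV : Uh = V := by
    have hsub : Uh - V = 0 := by
      apply ehrG_zero_of d (Uh - V)
        ((Polynomial.natDegree_sub_le _ _).trans (max_le hUdeg hVdeg))
      intro m
      have : ehrG d (Uh - V) m = ehrG d Uh m - ehrG d V m := by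
        rw [ehrG, ehrG, ehrG, ← Finset.sum_sub_distrib]
        apply Finset.sum_congr rfl
        intro i _
        rw [Polynomial.coeff_sub, sub_mul]
      rw [this, hU m, hVehr m, sub_self]
    linear_combination (norm := ring_nf) hsub
  have hUcoeff : ∀ j ≤ d + 1, Uh.coeff j = P.coeff (n * j) := by
    intro j hj
    rcases le_or_gt j d with hjd | hjd
    · rw [hUV, hVcoeff j hjd]
    · have hjd1 : j = d + 1 := by omega
      subst hjd1
      rw [Polynomial.coeff_eq_zero_of_natDegree_lt (by omega),
        Polynomial.coeff_eq_zero_of_natDegree_lt (show P.natDegree < n * (d + 1) by omega)]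
  -- symmetry of p and pb
  have hpsym : ∀ k ≤ n * (d + 1) - 1, p.coeff k = p.coeff (n * (d + 1) - 1 - k) := by
    have hrefl : p.reflect (d + (d + 1) * (n - 1)) = p := by
      rw [hpdef, Polynomial.reflect_mul a Q hadeg hQdeg, reflect_of_sym a d hasym,
        hQdef, reflect_geomPow n hn (d + 1)]
    intro k hk
    have := congrArg (fun q => Polynomial.coeff q k) hrefl
    simp only [Polynomial.coeff_reflect] at this
    rw [Polynomial.revAt_le (show k ≤ d + (d + 1) * (n - 1) by omega)] at this
    rw [← this, show d + (d + 1) * (n - 1) - k = n * (d + 1) - 1 - k by omega]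
  have hpbsym : ∀ k ≤ n * (d + 1), pb.coeff k = pb.coeff (n * (d + 1) - k) := by
    have hrefl : pb.reflect ((d + 1) + (d + 1) * (n - 1)) = pb := by
      rw [hpbdef, Polynomial.reflect_mul b Q hbdeg hQdeg, reflect_of_sym b (d + 1) hbsym,
        hQdef, reflect_geomPow n hn (d + 1)]
    intro k hk
    have := congrArg (fun q => Polynomial.coeff q k) hrefl
    simp only [Polynomial.coeff_reflect] at this
    rw [Polynomial.revAt_le (show k ≤ (d + 1) + (d + 1) * (n - 1) by omega)] at this
    rw [← this, show (d + 1) + (d + 1) * (n - 1) - k = n * (d + 1) - k by omega]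
  have hPsplit : ∀ k, P.coeff k = p.coeff k + pb.coeff k := by
    intro k
    rw [hPdef, hpdef, hpbdef, hab, add_mul, Polynomial.coeff_add]
  -- the formula for a' in terms of Uh
  have haprime : ∀ i, i ≤ d →
      a'.coeff i = ∑ j ∈ Finset.range (i + 1), (Uh.coeff j - Uh.coeff (d + 1 - j)) := by
    intro i
    induction i with
    | zero =>
      intro _
      rw [Finset.sum_range_one, show d + 1 - 0 = d + 1 by omega]
      have e0 : Uh.coeff (d + 1) = a'.coeff (d + 1) + b'.coeff (d + 1) := by
        rw [hab', Polynomial.coeff_add]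
      have e1 : Uh.coeff 0 = a'.coeff 0 + b'.coeff 0 := by
        rw [hab', Polynomial.coeff_add]
      have e2 : b'.coeff 0 = b'.coeff (d + 1) := by
        have := hb'sym 0 (by omega)
        rwa [show d + 1 - 0 = d + 1 by omega] at this
      have e3 : a'.coeff (d + 1) = 0 :=
        Polynomial.coeff_eq_zero_of_natDegree_lt (by omega)
      omega
    | succ i ih =>
      intro hi
      rw [Finset.sum_range_succ, ← ih (by omega), show d + 1 - (i + 1) = d - i by omega]
      have eU1 : Uh.coeff (i + 1) = a'.coeff (i + 1) + b'.coeff (i + 1) := by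
        rw [hab', Polynomial.coeff_add]
      have eU2 : Uh.coeff (d - i) = a'.coeff (d - i) + b'.coeff (d - i) := by
        rw [hab', Polynomial.coeff_add]
      have eb : b'.coeff (i + 1) = b'.coeff (d - i) := by
        have := hb'sym (i + 1) (by omega)
        rwa [show d + 1 - (i + 1) = d - i by omega] at this
      have ea : a'.coeff (d - i) = a'.coeff i := by
        have := ha'sym (d - i) (by omega)
        rwa [show d - (d - i) = i by omega] at this
      omega
  -- per-term computation
  intro i hi
  have hid : i ≤ d := le_trans hi (Nat.div_le_self d 2)
  rw [haprime i hid]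
  have hterm0 : Uh.coeff 0 - Uh.coeff (d + 1 - 0) = p.coeff (0 * n) := by
    rw [show d + 1 - 0 = d + 1 by omega, show 0 * n = 0 by omega,
      hUcoeff 0 (by omega), hUcoeff (d + 1) (by omega), show n * 0 = 0 by omega]
    have e1 := hPsplit 0
    have e2 := hPsplit (n * (d + 1))
    have e3 : p.coeff (n * (d + 1)) = 0 :=
      Polynomial.coeff_eq_zero_of_natDegree_lt (by omega)
    have e4 : pb.coeff 0 = pb.coeff (n * (d + 1)) := by
      have := hpbsym 0 (by omega)
      rwa [show n * (d + 1) - 0 = n * (d + 1) by omega] at this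
    omega
  have htermj : ∀ j, 1 ≤ j → j ≤ d / 2 →
      Uh.coeff j - Uh.coeff (d + 1 - j) = p.coeff (j * n) - p.coeff (j * n - 1) := by
    intro j hj1 hj2
    have hjd : j ≤ d := le_trans hj2 (Nat.div_le_self d 2)
    rw [hUcoeff j (by omega), hUcoeff (d + 1 - j) (by omega)]
    have hxy : n * j + n * (d + 1 - j) = n * (d + 1) := by
      rw [← Nat.mul_add]
      congr 1
      omega
    have hnj1 : 1 ≤ n * j := Nat.one_le_iff_ne_zero.mpr (Nat.mul_ne_zero hn.ne' (by omega))
    have hnjle : n * (d + 1 - j) ≤ n * d := Nat.mul_le_mul_left n (by omega)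
    have hnd : n * d + n = n * (d + 1) := by ring
    have e1 := hPsplit (n * j)
    have e2 := hPsplit (n * (d + 1 - j))
    have e3 : pb.coeff (n * j) = pb.coeff (n * (d + 1 - j)) := by
      have := hpbsym (n * j) (by omega)
      rwa [show n * (d + 1) - n * j = n * (d + 1 - j) by omega] at this
    have e4 : p.coeff (n * (d + 1 - j)) = p.coeff (n * j - 1) := by
      have := hpsym (n * (d + 1 - j)) (by omega)
      rwa [show n * (d + 1) - 1 - n * (d + 1 - j) = n * j - 1 by omega] at this
    rw [show j * n = n * j by ring]
    omega
  rw [Finset.sum_range_succ' (fun j => Uh.coeff j - Uh.coeff (d + 1 - j)) i,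
    Finset.sum_range_succ' (fun j => p.coeff (j * n)) i,
    Finset.sum_congr rfl (fun j hj => htermj (j + 1) (by omega)
      (by rw [Finset.mem_range] at hj; omega)),
    hterm0, Finset.sum_sub_distrib]
  ring
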